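/- arXiv:1810.01932 — 2 statements merged into one kernel-verified Lean document; each statement's English description precedes it below -/
import Mathlib

section
/- Define v₁(X) := -|x'|²/(n-1) + 2(x_n + 1) r and v₂(X) := -|x'|²/(n-1) - 2(x_n + 1) r, where r = √(x_n² + z²) and X = (x', x_n, z) ∈ ℝ^{n+1}. Then Δ(U_n v₁) = 0 in B₁ \ P⁻ and Δ(Ū_n v₂) = 0 in B₁ \ P⁺, where U_n = ∂_{x_n}U(x_n,z), Ū_n = ∂_{x_n}Ū(x_n,z). Moreover lim_{r→0}((v₁)_r + (v₂)_r) = 0 on L = {x_n = 0, z = 0}. -/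
open Real Filter Topology

/-- `ℝ^{n+1}` written as `X = (x', x_n, z)` with `x' ∈ ℝ^m`, `m = n-1`. -/
abbrev V (m : ℕ) := EuclideanSpace ℝ (Fin m) × ℝ × ℝ

/-- The function `U(t,z) = r^{1/2} cos(θ/2)`. -/
noncomputable def U2 (p : ℝ × ℝ) : ℝ :=
  Real.sqrt (Real.sqrt (p.1 ^ 2 + p.2 ^ 2)) *
    Real.cos (Complex.arg (p.1 + p.2 * Complex.I) / 2)

/-- `U_n(X) = ∂_{x_n} U(x_n, z)`. -/
noncomputable def Un {m : ℕ} (X : V m) : ℝ := deriv (fun t => U2 (t, X.2.2)) X.2.1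

/-- `Ū_n(X) = ∂_{x_n} Ū(x_n, z)` where `Ū(t,z) = U(-t,z)`. -/
noncomputable def Ubarn {m : ℕ} (X : V m) : ℝ := deriv (fun t => U2 (-t, X.2.2)) X.2.1

/-- Laplacian on `ℝ^{n+1}`. -/
noncomputable def lapV {m : ℕ} (u : V m → ℝ) (X : V m) : ℝ :=
  (∑ i : Fin m,
      iteratedDeriv 2 (fun s : ℝ => u (X.1 + s • EuclideanSpace.single i (1:ℝ), X.2.1, X.2.2)) 0)
    + iteratedDeriv 2 (fun s => u (X.1, X.2.1 + s, X.2.2)) 0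
    + iteratedDeriv 2 (fun s => u (X.1, X.2.1, X.2.2 + s)) 0

/-- Partial derivative in the `x_n` direction. -/
noncomputable def pdN {m : ℕ} (u : V m → ℝ) (X : V m) : ℝ :=
  deriv (fun s => u (X.1, X.2.1 + s, X.2.2)) 0

/-- Partial derivative in the `z` direction. -/
noncomputable def pdZ {m : ℕ} (u : V m → ℝ) (X : V m) : ℝ :=
  deriv (fun s => u (X.1, X.2.1, X.2.2 + s)) 0

/-- `r = √(x_n² + z²)`. -/
noncomputable def rad {m : ℕ} (X : V m) : ℝ := Real.sqrt (X.2.1 ^ 2 + X.2.2 ^ 2)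

/-- Radial derivative `g_r(X) = (x_n/r)∂_{x_n}g + (z/r)∂_z g`. -/
noncomputable def radDeriv {m : ℕ} (g : V m → ℝ) (X : V m) : ℝ :=
  (X.2.1 / rad X) * pdN g X + (X.2.2 / rad X) * pdZ g X

/-- `v₁(X) = -|x'|²/(n-1) + 2(x_n+1) r`. -/
noncomputable def v₁ {m : ℕ} (X : V m) : ℝ :=
  -‖X.1‖ ^ 2 / (m : ℝ) + 2 * (X.2.1 + 1) * rad X

/-- `v₂(X) = -|x'|²/(n-1) - 2(x_n+1) r`. -/
noncomputable def v₂ {m : ℕ} (X : V m) : ℝ :=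
  -‖X.1‖ ^ 2 / (m : ℝ) - 2 * (X.2.1 + 1) * rad X

/-! ### Auxiliary complex-analytic machinery -/

noncomputable def csq (w : ℂ) : ℂ := w ^ ((1/2 : ℂ))
noncomputable def cq (w : ℂ) : ℂ := (1/2 : ℂ) * w ^ (-(1/2 : ℂ))
noncomputable def cq₂ (w : ℂ) : ℂ := (-(1/4) : ℂ) * w ^ (-(3/2 : ℂ))
noncomputable def cq₃ (w : ℂ) : ℂ := ((3/8) : ℂ) * w ^ (-(5/2 : ℂ))

lemma hasDerivAt_csq {w : ℂ} (hw : w ∈ Complex.slitPlane) : HasDerivAt csq (cq w) w := by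
  have h := (Complex.hasStrictDerivAt_cpow_const (c := (1/2:ℂ)) hw).hasDerivAt
  have e : (1/2 : ℂ) - 1 = -(1/2) := by norm_num
  rw [e] at h
  exact h

lemma hasDerivAt_cq {w : ℂ} (hw : w ∈ Complex.slitPlane) : HasDerivAt cq (cq₂ w) w := by
  have h := ((Complex.hasStrictDerivAt_cpow_const (c := (-(1/2):ℂ)) hw).hasDerivAt).const_mul
    (1/2 : ℂ)
  have e : -(1/2 : ℂ) - 1 = -(3/2) := by norm_num
  rw [e] at h
  have e2 : (1/2 : ℂ) * (-(1/2) * w ^ (-(3/2:ℂ))) = cq₂ w := by rw [cq₂]; ring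
  rw [e2] at h
  exact h

lemma hasDerivAt_cq₂ {w : ℂ} (hw : w ∈ Complex.slitPlane) : HasDerivAt cq₂ (cq₃ w) w := by
  have h := ((Complex.hasStrictDerivAt_cpow_const (c := (-(3/2):ℂ)) hw).hasDerivAt).const_mul
    (-(1/4) : ℂ)
  have e : -(3/2 : ℂ) - 1 = -(5/2) := by norm_num
  rw [e] at h
  have e2 : (-(1/4) : ℂ) * (-(3/2) * w ^ (-(5/2:ℂ))) = cq₃ w := by rw [cq₃]; ring
  rw [e2] at h
  exact h

lemma comp_line {φ : ℂ → ℂ} {d : ℂ} {w a : ℂ} {s : ℝ}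
    (h : HasDerivAt φ d (w + ↑s * a)) :
    HasDerivAt (fun σ : ℝ => (φ (w + ↑σ * a)).re) ((d * a).re) s := by
  have inner : HasDerivAt (fun u : ℂ => w + u * a) a (↑s : ℂ) := by
    simpa using ((hasDerivAt_id ((s:ℂ))).mul_const a).const_add w
  have comp : HasDerivAt (fun u : ℂ => φ (w + u * a)) (d * a) (↑s : ℂ) := h.comp (↑s : ℂ) inner
  have comp2 : HasDerivAt (fun σ : ℝ => φ (w + ↑σ * a)) (d * a) s := comp.comp_ofReal
  exact (Complex.reCLM.hasFDerivAt.comp_hasDerivAt s comp2 :)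

lemma iter2_line {w a : ℂ} (hw : w ∈ Complex.slitPlane) (d E e : ℝ) {h : ℝ → ℝ}
    (hh : ∀ s : ℝ, w + ↑s * a ∈ Complex.slitPlane →
      h s = d * (cq (w + ↑s * a)).re + (E + e * s) * (csq (w + ↑s * a)).re) :
    iteratedDeriv 2 h 0 =
      d * (cq₃ w * a * a).re + 2 * e * (cq w * a).re + E * (cq₂ w * a * a).re := by
  set S : Set ℝ := (fun s : ℝ => w + ↑s * a) ⁻¹' Complex.slitPlane with hS
  have hSopen : IsOpen S := Complex.isOpen_slitPlane.preimage (by fun_prop)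
  have h0S : (0:ℝ) ∈ S := by simp [hS, Set.mem_preimage, hw]
  set h₁ : ℝ → ℝ := fun s => d * ((cq₂ (w + ↑s * a)) * a).re +
      (e * (csq (w + ↑s * a)).re + (E + e * s) * ((cq (w + ↑s * a)) * a).re) with hh₁
  have key : ∀ s ∈ S, HasDerivAt h (h₁ s) s := by
    intro s hs
    have hws : w + ↑s * a ∈ Complex.slitPlane := hs
    have P1 : HasDerivAt (fun σ : ℝ => (cq (w + ↑σ * a)).re) ((cq₂ (w + ↑s * a) * a).re) s :=
      comp_line (hasDerivAt_cq hws)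
    have P2 : HasDerivAt (fun σ : ℝ => (csq (w + ↑σ * a)).re) ((cq (w + ↑s * a) * a).re) s :=
      comp_line (hasDerivAt_csq hws)
    have lin : HasDerivAt (fun σ : ℝ => E + e * σ) e s := by
      simpa using ((hasDerivAt_id s).const_mul e).const_add E
    have sum := (P1.const_mul d).add (lin.mul P2)
    refine sum.congr_of_eventuallyEq ?_
    filter_upwards [hSopen.mem_nhds hs] with σ hσ using hh σ hσ
  have hev : deriv h =ᶠ[nhds (0:ℝ)] h₁ := by
    filter_upwards [hSopen.mem_nhds h0S] with s hs using (key s hs).deriv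
  rw [show (2:ℕ) = 1 + 1 from rfl, iteratedDeriv_succ, iteratedDeriv_one, hev.deriv_eq]
  have e0 : w + ((0:ℝ):ℂ) * a = w := by simp
  have Q1 : HasDerivAt (fun σ : ℝ => ((cq₂ (w + ↑σ * a)) * a).re) ((cq₃ w * a * a).re) 0 := by
    have := comp_line (φ := fun ww => cq₂ ww * a) (d := cq₃ w * a) (w := w) (a := a) (s := 0)
      (by rw [e0]; exact (hasDerivAt_cq₂ hw).mul_const a)
    simpa [mul_assoc] using this
  have Q2 : HasDerivAt (fun σ : ℝ => (csq (w + ↑σ * a)).re) ((cq w * a).re) 0 := by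
    have := comp_line (φ := csq) (d := cq w) (w := w) (a := a) (s := 0)
      (by rw [e0]; exact hasDerivAt_csq hw)
    simpa using this
  have Q3 : HasDerivAt (fun σ : ℝ => ((cq (w + ↑σ * a)) * a).re) ((cq₂ w * a * a).re) 0 := by
    have := comp_line (φ := fun ww => cq ww * a) (d := cq₂ w * a) (w := w) (a := a) (s := 0)
      (by rw [e0]; exact (hasDerivAt_cq hw).mul_const a)
    simpa [mul_assoc] using this
  have lin0 : HasDerivAt (fun σ : ℝ => E + e * σ) e 0 := by
    simpa using ((hasDerivAt_id (0:ℝ)).const_mul e).const_add E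
  have total := (Q1.const_mul d).fun_add ((Q2.const_mul e).fun_add (lin0.fun_mul Q3))
  rw [hh₁, total.deriv]
  simp only [e0]
  ring

lemma logmul_re (c : ℝ) (w : ℂ) : (Complex.log w * (c:ℂ)).re = Real.log (‖w‖) * c := by
  simp [Complex.mul_re, Complex.log_re]

lemma logmul_im (c : ℝ) (w : ℂ) : (Complex.log w * (c:ℂ)).im = Complex.arg w * c := by
  simp [Complex.mul_im, Complex.log_im]

lemma U2_eq (t z : ℝ) : U2 (t, z) = (csq (↑t + ↑z * Complex.I)).re := by
  rw [csq]
  set w : ℂ := ↑t + ↑z * Complex.I with hw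
  by_cases h0 : w = 0
  · have ht : t = 0 := by have := congrArg Complex.re h0; simpa [hw] using this
    have hz : z = 0 := by have := congrArg Complex.im h0; simpa [hw] using this
    rw [h0, Complex.zero_cpow (by norm_num : (1/2:ℂ) ≠ 0)]
    simp [U2, ht, hz]
  · have habs : ‖w‖ = Real.sqrt (t^2 + z^2) := by
      rw [hw]; exact Complex.norm_add_mul_I t z
    have habs_pos : 0 < ‖w‖ := norm_pos_iff.mpr h0
    rw [Complex.cpow_def_of_ne_zero h0]
    rw [Complex.exp_re]
    rw [show (1/2 : ℂ) = ((1/2 : ℝ) : ℂ) by norm_num]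
    rw [logmul_re, logmul_im]
    rw [U2]
    have h1 : Real.sqrt (t^2 + z^2) = ‖w‖ := habs.symm
    rw [show (t:ℝ)^2 + z^2 = t^2 + z^2 from rfl, h1]
    have h2 : Real.sqrt (‖w‖) = Real.exp (Real.log (‖w‖) * (1/2)) := by
      rw [Real.sqrt_eq_rpow, Real.rpow_def_of_pos habs_pos]
    rw [h2]
    have h3 : Complex.arg (↑t + ↑z * Complex.I) = Complex.arg w := by rw [hw]
    rw [h3]
    ring_nf

lemma abs_mul_re {w : ℂ} (h0 : w ≠ 0) :
    ‖w‖ * ((w ^ (-(1/2):ℂ)).re) = (w ^ ((1/2):ℂ)).re := by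
  have habs_pos : 0 < ‖w‖ := norm_pos_iff.mpr h0
  rw [Complex.cpow_def_of_ne_zero h0, Complex.cpow_def_of_ne_zero h0,
    Complex.exp_re, Complex.exp_re]
  rw [show (1/2 : ℂ) = ((1/2 : ℝ) : ℂ) by norm_num,
      show (-((1/2:ℝ)) : ℂ) = ((-(1/2) : ℝ) : ℂ) by push_cast; ring]
  rw [logmul_re, logmul_im, logmul_re, logmul_im]
  rw [show ‖w‖ * (Real.exp (Real.log (‖w‖) * (-(1/2))) *
        Real.cos (Complex.arg w * (-(1/2)))) =
      (Real.exp (Real.log (‖w‖)) * Real.exp (Real.log (‖w‖) * (-(1/2)))) *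
        Real.cos (-(Complex.arg w * (1/2))) by
    rw [Real.exp_log habs_pos]; ring_nf]
  rw [← Real.exp_add, Real.cos_neg]
  ring_nf

lemma cq_re (w : ℂ) : (cq w).re = 1/2 * (w ^ (-(1/2):ℂ)).re := by
  rw [cq, show (1/2 : ℂ) = ((1/2 : ℝ) : ℂ) by norm_num, Complex.re_ofReal_mul]

lemma two_abs_cq {w : ℂ} (h0 : w ≠ 0) :
    2 * ‖w‖ * (cq w).re = (csq w).re := by
  rw [cq_re, csq, ← abs_mul_re h0]; ring

lemma deriv_U2_pos (t z : ℝ) (hw : (↑t + ↑z * Complex.I : ℂ) ∈ Complex.slitPlane) :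
    deriv (fun s => U2 (s, z)) t = (cq (↑t + ↑z * Complex.I)).re := by
  have hfun : (fun s : ℝ => U2 (s, z)) = fun s : ℝ => (csq ((↑z * Complex.I : ℂ) + ↑s * 1)).re := by
    funext s
    rw [U2_eq s z]
    congr 1
    push_cast
    ring
  rw [hfun]
  have h := comp_line (φ := csq) (d := cq (↑t + ↑z * Complex.I)) (w := ↑z * Complex.I) (a := 1)
    (s := t)
    (by rw [show ((↑z * Complex.I : ℂ) + ↑t * 1) = ↑t + ↑z * Complex.I by ring]
        exact hasDerivAt_csq hw)
  simpa using h.deriv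

lemma deriv_U2_neg (t z : ℝ) (hw : (-↑t + ↑z * Complex.I : ℂ) ∈ Complex.slitPlane) :
    deriv (fun s => U2 (-s, z)) t = -(cq (-↑t + ↑z * Complex.I)).re := by
  have hfun : (fun s : ℝ => U2 (-s, z)) =
      fun s : ℝ => (csq ((↑z * Complex.I : ℂ) + ↑s * (-1))).re := by
    funext s
    rw [U2_eq (-s) z]
    congr 1
    push_cast
    ring
  rw [hfun]
  have h := comp_line (φ := csq) (d := cq (-↑t + ↑z * Complex.I)) (w := ↑z * Complex.I) (a := -1)
    (s := t)
    (by rw [show ((↑z * Complex.I : ℂ) + ↑t * (-1)) = -↑t + ↑z * Complex.I by ring]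
        exact hasDerivAt_csq hw)
  have h2 := h.deriv
  rw [h2]
  simp

lemma rad_eq {m : ℕ} (x' : EuclideanSpace ℝ (Fin m)) (t z : ℝ) :
    rad ((x', t, z) : V m) = ‖(↑t + ↑z * Complex.I : ℂ)‖ := by
  rw [rad, Complex.norm_add_mul_I]

lemma rad_eq_neg {m : ℕ} (x' : EuclideanSpace ℝ (Fin m)) (t z : ℝ) :
    rad ((x', t, z) : V m) = ‖(-↑t + ↑z * Complex.I : ℂ)‖ := by
  rw [rad, show (-↑t : ℂ) = ((-t : ℝ) : ℂ) by push_cast; ring, Complex.norm_add_mul_I]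
  norm_num

lemma prod1 {m : ℕ} (x' : EuclideanSpace ℝ (Fin m)) (t z : ℝ)
    (hw : (↑t + ↑z * Complex.I : ℂ) ∈ Complex.slitPlane) :
    Un ((x', t, z) : V m) * v₁ ((x', t, z) : V m) =
      (-‖x'‖^2 / m) * (cq (↑t + ↑z * Complex.I)).re
        + (t + 1) * (csq (↑t + ↑z * Complex.I)).re := by
  set w : ℂ := ↑t + ↑z * Complex.I with hwdef
  have hUn : Un ((x', t, z) : V m) = (cq w).re := deriv_U2_pos t z hw
  have hrad : rad ((x', t, z) : V m) = ‖w‖ := rad_eq x' t z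
  have h0 : w ≠ 0 := Complex.slitPlane_ne_zero hw
  rw [v₁]
  show Un ((x', t, z) : V m) * (-‖x'‖ ^ 2 / ↑m + 2 * (t + 1) * rad ((x', t, z) : V m)) = _
  rw [hUn, hrad, ← two_abs_cq h0]
  ring

lemma prod2 {m : ℕ} (x' : EuclideanSpace ℝ (Fin m)) (t z : ℝ)
    (hw : (-↑t + ↑z * Complex.I : ℂ) ∈ Complex.slitPlane) :
    Ubarn ((x', t, z) : V m) * v₂ ((x', t, z) : V m) =
      (‖x'‖^2 / m) * (cq (-↑t + ↑z * Complex.I)).re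
        + (t + 1) * (csq (-↑t + ↑z * Complex.I)).re := by
  set w : ℂ := -↑t + ↑z * Complex.I with hwdef
  have hUn : Ubarn ((x', t, z) : V m) = -(cq w).re := deriv_U2_neg t z hw
  have hrad : rad ((x', t, z) : V m) = ‖w‖ := rad_eq_neg x' t z
  have h0 : w ≠ 0 := Complex.slitPlane_ne_zero hw
  rw [v₂]
  show Ubarn ((x', t, z) : V m) * (-‖x'‖ ^ 2 / ↑m - 2 * (t + 1) * rad ((x', t, z) : V m)) = _
  rw [hUn, hrad, ← two_abs_cq h0]
  ring

lemma iter2_quad (A B C : ℝ) : iteratedDeriv 2 (fun s : ℝ => A + B * s + C * s^2) 0 = 2 * C := by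
  have hd : deriv (fun s : ℝ => A + B * s + C * s ^ 2) = fun s : ℝ => B + C * 2 * s := by
    funext s
    have h1 : HasDerivAt (fun s : ℝ => A + B * s) B s := by
      simpa using ((hasDerivAt_id s).const_mul B).const_add A
    have h2 : HasDerivAt (fun s : ℝ => C * s ^ 2) (C * (2 * s)) s := by
      simpa using (hasDerivAt_pow 2 s).const_mul C
    have h := h1.fun_add h2
    rw [h.deriv]
    ring
  rw [show (2:ℕ) = 1 + 1 from rfl, iteratedDeriv_succ, iteratedDeriv_one, hd]
  have h : HasDerivAt (fun s : ℝ => B + C * 2 * s) (C * 2) 0 := by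
    simpa using ((hasDerivAt_id (0:ℝ)).const_mul (C * 2)).const_add B
  rw [h.deriv]
  ring

lemma norm_expand {m : ℕ} (x' : EuclideanSpace ℝ (Fin m)) (i : Fin m) (s : ℝ) :
    ‖x' + s • EuclideanSpace.single i (1:ℝ)‖^2 = ‖x'‖^2 + 2 * (x' i) * s + s^2 := by
  rw [norm_add_sq_real, real_inner_smul_right, EuclideanSpace.inner_single_right,
    norm_smul, EuclideanSpace.norm_single]
  simp [mul_pow, sq_abs]
  ring

lemma xsum_part {m : ℕ} (hm : 1 ≤ m) (x' : EuclideanSpace ℝ (Fin m)) (t z : ℝ)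
    (g : ℝ × ℝ → ℝ) (u : V m → ℝ)
    (hu : ∀ Y : V m, u Y = g Y.2 - ‖Y.1‖^2 / m) (K : ℝ) :
    (∑ i : Fin m, iteratedDeriv 2
        (fun s : ℝ => K * u (x' + s • EuclideanSpace.single i (1:ℝ), t, z)) 0) = -2 * K := by
  have hm0 : (m : ℝ) ≠ 0 := by positivity
  have hterm : ∀ i : Fin m, iteratedDeriv 2
      (fun s : ℝ => K * u (x' + s • EuclideanSpace.single i (1:ℝ), t, z)) 0
        = 2 * (K * (-1/m)) := by
    intro i
    have hfun : (fun s : ℝ => K * u (x' + s • EuclideanSpace.single i (1:ℝ), t, z)) =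
        fun s : ℝ => (K * (g (t, z) - ‖x'‖^2/m))
          + (K * (-2 * (x' i) / m)) * s + (K * (-1/m)) * s^2 := by
      funext s
      rw [hu]
      show K * (g (t, z) - ‖x' + s • EuclideanSpace.single i (1:ℝ)‖^2 / m) = _
      rw [norm_expand]
      field_simp
      ring
    rw [hfun, iter2_quad]
  rw [Finset.sum_congr rfl (fun i _ => hterm i), Finset.sum_const, Finset.card_univ,
    Fintype.card_fin, nsmul_eq_mul]
  field_simp

lemma mem_slit (t z : ℝ) (h : 0 < t ∨ z ≠ 0) :
    (↑t + ↑z * Complex.I : ℂ) ∈ Complex.slitPlane := by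
  rw [Complex.mem_slitPlane_iff]
  simpa using h

/-- `Δ(U_n v₁) = 0` in `B₁ \ P⁻`, `Δ(Ū_n v₂) = 0` in `B₁ \ P⁺`, and
`(v₁)_r + (v₂)_r → 0` at `L = {x_n = 0, z = 0}`. -/
theorem stmt5 {m : ℕ} (hm : 1 ≤ m) :
    (∀ X : V m, ‖X.1‖ ^ 2 + X.2.1 ^ 2 + X.2.2 ^ 2 < 1 → ¬(X.2.1 ≤ 0 ∧ X.2.2 = 0) →
      lapV (fun Y => Un Y * v₁ Y) X = 0) ∧
    (∀ X : V m, ‖X.1‖ ^ 2 + X.2.1 ^ 2 + X.2.2 ^ 2 < 1 → ¬(0 ≤ X.2.1 ∧ X.2.2 = 0) →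
      lapV (fun Y => Ubarn Y * v₂ Y) X = 0) ∧
    (∀ x' : EuclideanSpace ℝ (Fin m),
      Tendsto (fun p : ℝ × ℝ => radDeriv v₁ (x', p.1, p.2) + radDeriv v₂ (x', p.1, p.2))
        (𝓝[≠] (0 : ℝ × ℝ)) (𝓝 0)) := by
  have hm0 : (m : ℝ) ≠ 0 := by positivity
  refine ⟨?_, ?_, ?_⟩
  · -- Part 1
    rintro ⟨x', t, z⟩ _hB hP
    set w : ℂ := ↑t + ↑z * Complex.I with hwdef
    have hw : w ∈ Complex.slitPlane := by
      apply mem_slit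
      by_cases hz : z = 0
      · exact Or.inl (not_le.mp fun hle => hP ⟨hle, hz⟩)
      · exact Or.inr hz
    set d : ℝ := -‖x'‖^2 / m with hddef
    have hT : iteratedDeriv 2
        (fun s : ℝ => Un ((x', t + s, z) : V m) * v₁ ((x', t + s, z) : V m)) 0
        = d * (cq₃ w * 1 * 1).re + 2 * 1 * (cq w * 1).re + (t+1) * (cq₂ w * 1 * 1).re := by
      apply iter2_line hw
      intro s hs
      have hws : (↑(t+s) + ↑z * Complex.I : ℂ) = w + ↑s * 1 := by rw [hwdef]; push_cast; ring
      have hp := prod1 x' (t+s) z (by rw [hws]; exact hs)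
      rw [hws] at hp
      rw [hp]
      ring
    have hZ : iteratedDeriv 2
        (fun s : ℝ => Un ((x', t, z + s) : V m) * v₁ ((x', t, z + s) : V m)) 0
        = d * (cq₃ w * Complex.I * Complex.I).re + 2 * 0 * (cq w * Complex.I).re
          + (t+1) * (cq₂ w * Complex.I * Complex.I).re := by
      apply iter2_line hw
      intro s hs
      have hws : (↑t + ↑(z+s) * Complex.I : ℂ) = w + ↑s * Complex.I := by
        rw [hwdef]; push_cast; ring
      have hp := prod1 x' t (z+s) (by rw [hws]; exact hs)
      rw [hws] at hp
      rw [hp]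
      ring
    have hu1 : ∀ Y : V m, v₁ Y =
        (fun p : ℝ × ℝ => 2 * (p.1 + 1) * Real.sqrt (p.1^2 + p.2^2)) Y.2 - ‖Y.1‖^2 / m := by
      intro Y
      rw [v₁, rad]
      ring
    have hX : (∑ i : Fin m, iteratedDeriv 2
        (fun s : ℝ => Un ((x' + s • EuclideanSpace.single i (1:ℝ), t, z) : V m)
          * v₁ ((x' + s • EuclideanSpace.single i (1:ℝ), t, z) : V m)) 0)
        = -2 * Un ((x', t, z) : V m) :=
      xsum_part hm x' t z (fun p : ℝ × ℝ => 2 * (p.1 + 1) * Real.sqrt (p.1^2 + p.2^2)) v₁ hu1 (Un ((x', t, z) : V m))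
    have hUn : Un ((x', t, z) : V m) = (cq w).re := deriv_U2_pos t z hw
    have hgoal : lapV (fun Y => Un Y * v₁ Y) ((x', t, z) : V m) =
        (∑ i : Fin m, iteratedDeriv 2
          (fun s : ℝ => Un ((x' + s • EuclideanSpace.single i (1:ℝ), t, z) : V m)
            * v₁ ((x' + s • EuclideanSpace.single i (1:ℝ), t, z) : V m)) 0)
        + iteratedDeriv 2
            (fun s : ℝ => Un ((x', t + s, z) : V m) * v₁ ((x', t + s, z) : V m)) 0
        + iteratedDeriv 2
            (fun s : ℝ => Un ((x', t, z + s) : V m) * v₁ ((x', t, z + s) : V m)) 0 := rfl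
    rw [hgoal, hX, hT, hZ, hUn]
    have e1 : cq₃ w * Complex.I * Complex.I = -cq₃ w := by
      rw [mul_assoc, Complex.I_mul_I, mul_neg_one]
    have e2 : cq₂ w * Complex.I * Complex.I = -cq₂ w := by
      rw [mul_assoc, Complex.I_mul_I, mul_neg_one]
    rw [e1, e2]
    simp only [mul_one, Complex.neg_re]
    ring
  · -- Part 2
    rintro ⟨x', t, z⟩ _hB hP
    set w : ℂ := -↑t + ↑z * Complex.I with hwdef
    have hw : w ∈ Complex.slitPlane := by
      rw [show w = (↑(-t) + ↑z * Complex.I : ℂ) by rw [hwdef]; push_cast; ring]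
      apply mem_slit
      by_cases hz : z = 0
      · left
        have : ¬ (0 : ℝ) ≤ t := fun hle => hP ⟨hle, hz⟩
        linarith [not_le.mp this]
      · exact Or.inr hz
    set d : ℝ := ‖x'‖^2 / m with hddef
    have hT : iteratedDeriv 2
        (fun s : ℝ => Ubarn ((x', t + s, z) : V m) * v₂ ((x', t + s, z) : V m)) 0
        = d * (cq₃ w * (-1) * (-1)).re + 2 * 1 * (cq w * (-1)).re
          + (t+1) * (cq₂ w * (-1) * (-1)).re := by
      apply iter2_line hw
      intro s hs
      have hws : (-↑(t+s) + ↑z * Complex.I : ℂ) = w + ↑s * (-1) := by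
        rw [hwdef]; push_cast; ring
      have hp := prod2 x' (t+s) z (by rw [hws]; exact hs)
      rw [hws] at hp
      rw [hp]
      ring
    have hZ : iteratedDeriv 2
        (fun s : ℝ => Ubarn ((x', t, z + s) : V m) * v₂ ((x', t, z + s) : V m)) 0
        = d * (cq₃ w * Complex.I * Complex.I).re + 2 * 0 * (cq w * Complex.I).re
          + (t+1) * (cq₂ w * Complex.I * Complex.I).re := by
      apply iter2_line hw
      intro s hs
      have hws : (-↑t + ↑(z+s) * Complex.I : ℂ) = w + ↑s * Complex.I := by
        rw [hwdef]; push_cast; ring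
      have hp := prod2 x' t (z+s) (by rw [hws]; exact hs)
      rw [hws] at hp
      rw [hp]
      ring
    have hu2 : ∀ Y : V m, v₂ Y =
        (fun p : ℝ × ℝ => -(2 * (p.1 + 1) * Real.sqrt (p.1^2 + p.2^2))) Y.2 - ‖Y.1‖^2 / m := by
      intro Y
      rw [v₂, rad]
      ring
    have hX : (∑ i : Fin m, iteratedDeriv 2
        (fun s : ℝ => Ubarn ((x' + s • EuclideanSpace.single i (1:ℝ), t, z) : V m)
          * v₂ ((x' + s • EuclideanSpace.single i (1:ℝ), t, z) : V m)) 0)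
        = -2 * Ubarn ((x', t, z) : V m) :=
      xsum_part hm x' t z (fun p : ℝ × ℝ => -(2 * (p.1 + 1) * Real.sqrt (p.1^2 + p.2^2))) v₂ hu2 (Ubarn ((x', t, z) : V m))
    have hUn : Ubarn ((x', t, z) : V m) = -(cq w).re := deriv_U2_neg t z hw
    have hgoal : lapV (fun Y => Ubarn Y * v₂ Y) ((x', t, z) : V m) =
        (∑ i : Fin m, iteratedDeriv 2
          (fun s : ℝ => Ubarn ((x' + s • EuclideanSpace.single i (1:ℝ), t, z) : V m)
            * v₂ ((x' + s • EuclideanSpace.single i (1:ℝ), t, z) : V m)) 0)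
        + iteratedDeriv 2
            (fun s : ℝ => Ubarn ((x', t + s, z) : V m) * v₂ ((x', t + s, z) : V m)) 0
        + iteratedDeriv 2
            (fun s : ℝ => Ubarn ((x', t, z + s) : V m) * v₂ ((x', t, z + s) : V m)) 0 := rfl
    rw [hgoal, hX, hT, hZ, hUn]
    have e1 : cq₃ w * Complex.I * Complex.I = -cq₃ w := by
      rw [mul_assoc, Complex.I_mul_I, mul_neg_one]
    have e2 : cq₂ w * Complex.I * Complex.I = -cq₂ w := by
      rw [mul_assoc, Complex.I_mul_I, mul_neg_one]
    have e3 : cq₃ w * (-1) * (-1) = cq₃ w := by ring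
    have e4 : cq₂ w * (-1) * (-1) = cq₂ w := by ring
    have e5 : (cq w * (-1)).re = -(cq w).re := by
      rw [mul_neg_one, Complex.neg_re]
    rw [e1, e2, e3, e4, e5]
    simp only [Complex.neg_re]
    ring

  · -- Part 3
    intro x'
    have hzero : ∀ p : ℝ × ℝ,
        radDeriv v₁ ((x', p.1, p.2) : V m) + radDeriv v₂ ((x', p.1, p.2) : V m) = 0 := by
      intro p
      obtain ⟨t, z⟩ := p
      have hN : pdN (v₂ (m := m)) (x', t, z) = -pdN (v₁ (m := m)) (x', t, z) := by
        rw [pdN, pdN]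
        have hfun : (fun s : ℝ => v₂ ((x', t + s, z) : V m)) =
            fun s : ℝ => (-2 * ‖x'‖^2 / m) - v₁ ((x', t + s, z) : V m) := by
          funext s
          rw [v₁, v₂]
          show -‖x'‖ ^ 2 / ↑m - 2 * ((t + s) + 1) * rad ((x', t + s, z) : V m) = _
          ring_nf
        rw [hfun]
        exact deriv_const_sub _
      have hZ : pdZ (v₂ (m := m)) (x', t, z) = -pdZ (v₁ (m := m)) (x', t, z) := by
        rw [pdZ, pdZ]
        have hfun : (fun s : ℝ => v₂ ((x', t, z + s) : V m)) =
            fun s : ℝ => (-2 * ‖x'‖^2 / m) - v₁ ((x', t, z + s) : V m) := by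
          funext s
          rw [v₁, v₂]
          show -‖x'‖ ^ 2 / ↑m - 2 * (t + 1) * rad ((x', t, z + s) : V m) = _
          ring_nf
        rw [hfun]
        exact deriv_const_sub _
      rw [radDeriv, radDeriv, hN, hZ]
      ring
    have : (fun p : ℝ × ℝ => radDeriv v₁ ((x', p.1, p.2) : V m)
        + radDeriv v₂ ((x', p.1, p.2) : V m)) = fun _ => (0:ℝ) := funext hzero
    rw [this]
    exact tendsto_const_nhds
end

section
/- For any 0 < ε < 2, the function U satisfies U(X + ε e_n) ≥ (1 + cε) U(X) for all X ∈ B₁ ⊂ ℝ^{n+1}, where c > 0 is a universal constant, e_n is the unit vector in the x_n direction, and U(X) = U(x_n, z) = r^{1/2} cos(θ/2). -/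
set_option maxHeartbeats 1000000


open Real

/-- `U(X) = U(x_n, z)` on `ℝ^{n+1}`. -/
noncomputable def UU {m : ℕ} (X : V m) : ℝ := U2 (X.2.1, X.2.2)

lemma U2_eq_s13 (t z : ℝ) :
    U2 (t, z) = Real.sqrt ((Real.sqrt (t ^ 2 + z ^ 2) + t) / 2) := by
  set w : ℂ := t + z * Complex.I with hw
  have hre : w.re = t := by simp [hw]
  have him : w.im = z := by simp [hw]
  have habs : ‖w‖ = Real.sqrt (t ^ 2 + z ^ 2) := by
    rw [Complex.norm_def, Complex.normSq_apply, hre, him]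
    norm_num [pow_two]
  by_cases h0 : w = 0
  · have ht : t = 0 := by rw [← hre, h0]; simp
    have hz : z = 0 := by rw [← him, h0]; simp
    simp [U2, ht, hz]
  · have hR : 0 < Real.sqrt (t ^ 2 + z ^ 2) := by
      rw [← habs]; exact norm_pos_iff.mpr h0
    set R := Real.sqrt (t ^ 2 + z ^ 2) with hRdef
    have hcos : Real.cos (Complex.arg w / 2)
        = Real.sqrt ((1 + Real.cos (Complex.arg w)) / 2) :=
      Real.cos_half (Complex.neg_pi_lt_arg w).le (Complex.arg_le_pi w)
    have hcosarg : Real.cos (Complex.arg w) = t / R := by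
      rw [Complex.cos_arg h0, hre, habs]
    have : U2 (t, z) = Real.sqrt R * Real.sqrt ((1 + t / R) / 2) := by
      rw [U2]; simp only [← hRdef]
      rw [hcos, hcosarg]
    rw [this, ← Real.sqrt_mul hR.le]
    congr 1
    field_simp

/-- For a universal constant `c > 0` and any `0 < ε < 2`,
`U(X + ε e_n) ≥ (1 + cε) U(X)` in the unit ball `B₁ ⊂ ℝ^{n+1}`. -/
theorem stmt13 :
    ∃ c : ℝ, 0 < c ∧ ∀ (m : ℕ) (ε : ℝ), 0 < ε → ε < 2 →
      ∀ X : V m, ‖X.1‖ ^ 2 + X.2.1 ^ 2 + X.2.2 ^ 2 < 1 →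
        (1 + c * ε) * UU X ≤ UU (X.1, X.2.1 + ε, X.2.2) := by
  refine ⟨1/10, by norm_num, fun m ε hε hε2 X hX => ?_⟩
  obtain ⟨x', t, z⟩ := X
  simp only [UU]
  rw [U2_eq_s13, U2_eq_s13]
  set r := Real.sqrt (t ^ 2 + z ^ 2) with hr
  set rε := Real.sqrt ((t + ε) ^ 2 + z ^ 2) with hrε
  have hr0 : 0 ≤ r := Real.sqrt_nonneg _
  have hrε0 : 0 ≤ rε := Real.sqrt_nonneg _
  have hrsq : r ^ 2 = t ^ 2 + z ^ 2 := Real.sq_sqrt (by positivity)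
  have hrεsq : rε ^ 2 = (t + ε) ^ 2 + z ^ 2 := Real.sq_sqrt (by positivity)
  have habsx : 0 ≤ ‖x'‖ ^ 2 := by positivity
  have hrlt : r < 1 := by
    rw [hr]
    have : t ^ 2 + z ^ 2 < 1 := by nlinarith
    nlinarith [Real.sq_sqrt (show (0:ℝ) ≤ t ^ 2 + z ^ 2 by positivity),
      Real.sqrt_nonneg (t ^ 2 + z ^ 2)]
  have htr : |t| ≤ r := by
    rw [hr]
    have := Real.sqrt_le_sqrt (show t ^ 2 ≤ t ^ 2 + z ^ 2 from le_add_of_nonneg_right (sq_nonneg z))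
    rwa [Real.sqrt_sq_eq_abs] at this
  have htεrε : |t + ε| ≤ rε := by
    rw [hrε]
    have := Real.sqrt_le_sqrt (show (t + ε) ^ 2 ≤ (t + ε) ^ 2 + z ^ 2 from le_add_of_nonneg_right (sq_nonneg z))
    rwa [Real.sqrt_sq_eq_abs] at this
  have hf0 : 0 ≤ r + t := by cases abs_le.mp htr; linarith
  have hfε0 : 0 ≤ rε + (t + ε) := by cases abs_le.mp htεrε; linarith
  -- rε ≤ r + ε
  have hrεle : rε ≤ r + ε := by
    nlinarith [abs_le.mp htr]
  -- key identity
  have hkey : (rε + (t + ε) - (r + t)) * (rε + r) = ε * ((r + t) + (rε + (t + ε))) := by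
    nlinarith [hrsq, hrεsq]
  have hsum : 0 < rε + r := by
    rcases eq_or_lt_of_le (by linarith : (0:ℝ) ≤ rε + r) with h | h
    · exfalso
      have hre : rε = 0 := by linarith [hr0, hrε0]
      have hr' : r = 0 := by linarith [hr0, hrε0]
      have := abs_le.mp htεrε
      have := abs_le.mp htr
      have ht0 : t = 0 := by cases abs_le.mp htr; linarith
      linarith [(abs_le.mp htεrε).2, (abs_le.mp htεrε).1]
    · exact h
  have hmono : r + t ≤ rε + (t + ε) := by
    nlinarith [hkey, hsum]
  have hstep : (1 + ε / 4) * (r + t) ≤ rε + (t + ε) := by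
    have h4 : rε + r ≤ 4 := by linarith
    have hΔ : 0 ≤ rε + (t + ε) - (r + t) := by linarith
    nlinarith [hkey, mul_nonneg (sub_nonneg.mpr h4) hΔ, mul_nonneg hε.le hfε0]
  have hsq : (1 + (1/10) * ε) ^ 2 * ((r + t) / 2) ≤ (rε + (t + ε)) / 2 := by
    have : (1 + (1/10) * ε) ^ 2 ≤ 1 + ε / 4 := by nlinarith
    nlinarith [hf0]
  calc (1 + 1/10 * ε) * Real.sqrt ((r + t) / 2)
      = Real.sqrt ((1 + 1/10 * ε) ^ 2 * ((r + t) / 2)) := by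
        rw [Real.sqrt_mul (by positivity), Real.sqrt_sq (by positivity)]
    _ ≤ Real.sqrt ((rε + (t + ε)) / 2) := Real.sqrt_le_sqrt hsq
end
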